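/- Sufficiency of the optimality conditions: Let {Π̂_i}_{i=0}^m be a measurement with P_I({Π̂_i}) = β. Suppose there exist a Hermitian n×n matrix X and a real number δ such that X − p_i ρ_i is positive semidefinite for every 1 ≤ i ≤ m, X − δΔ is positive semidefinite, (X − p_i ρ_i)Π̂_i = 0 for every 1 ≤ i ≤ m, and (X − δΔ)Π̂_0 = 0. Then {Π̂_i} maximizes the probability of correct detection among all measurements with inconclusive rate β: for every measurement {Π_i}_{i=0}^m with P_I({Π_i}) = β one has P_D({Π_i}) ≤ P_D({Π̂_i}). -/

import Mathlib

open Matrix BigOperators ComplexOrder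

lemma psd_trace_nonneg {k : ℕ} {A : Matrix (Fin k) (Fin k) ℂ} (hA : A.PosSemidef) :
    0 ≤ A.trace := by
  obtain ⟨B, rfl⟩ : ∃ B : Matrix (Fin k) (Fin k) ℂ, A = Bᴴ * B := by
    open MatrixOrder in exact CStarAlgebra.nonneg_iff_eq_star_mul_self.mp hA.nonneg
  rw [Matrix.trace]
  refine Finset.sum_nonneg fun i _ => ?_
  simp only [Matrix.diag_apply, Matrix.mul_apply, Matrix.conjTranspose_apply]
  exact Finset.sum_nonneg fun j _ => star_mul_self_nonneg _

lemma psd_trace_mul_nonneg {k : ℕ} {A B : Matrix (Fin k) (Fin k) ℂ}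
    (hA : A.PosSemidef) (hB : B.PosSemidef) : 0 ≤ (A * B).trace := by
  obtain ⟨C, rfl⟩ : ∃ C : Matrix (Fin k) (Fin k) ℂ, A = Cᴴ * C := by
    open MatrixOrder in exact CStarAlgebra.nonneg_iff_eq_star_mul_self.mp hA.nonneg
  rw [Matrix.mul_assoc, Matrix.trace_mul_comm]
  exact psd_trace_nonneg ((hB.mul_mul_conjTranspose_same C))

lemma key_identity {k m : ℕ} (X Δ : Matrix (Fin k) (Fin k) ℂ) (δ : ℂ)
    (ρ : Fin m → Matrix (Fin k) (Fin k) ℂ) (p : Fin m → ℂ)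
    (N0 : Matrix (Fin k) (Fin k) ℂ) (N : Fin m → Matrix (Fin k) (Fin k) ℂ)
    (hsum : N0 + ∑ i, N i = 1) :
    ((X - δ • Δ) * N0).trace + ∑ i, ((X - p i • ρ i) * N i).trace
      = X.trace - δ * (Δ * N0).trace - ∑ i, p i * (ρ i * N i).trace := by
  have hXs : (X * N0).trace + ∑ i, (X * N i).trace = X.trace := by
    rw [← Matrix.trace_sum, ← Matrix.trace_add, ← Finset.mul_sum, ← mul_add, hsum, mul_one]
  simp only [Matrix.sub_mul, Matrix.smul_mul, Matrix.trace_sub, Matrix.trace_smul,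
    smul_eq_mul, Finset.sum_sub_distrib]
  linear_combination hXs

theorem stmt_0 {n m : ℕ}
    (ρ : Fin m → Matrix (Fin n) (Fin n) ℂ) (p : Fin m → ℝ)
    (hρpsd : ∀ i, (ρ i).PosSemidef) (hρtr : ∀ i, (ρ i).trace = 1)
    (hp : ∀ i, 0 < p i) (hpsum : ∑ i, p i = 1)
    (Δ : Matrix (Fin n) (Fin n) ℂ) (hΔ : Δ = ∑ i, (p i : ℂ) • ρ i)
    (β : ℝ)
    -- the candidate measurement
    (M0 : Matrix (Fin n) (Fin n) ℂ) (M : Fin m → Matrix (Fin n) (Fin n) ℂ)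
    (hM0 : M0.PosSemidef) (hM : ∀ i, (M i).PosSemidef)
    (hMsum : M0 + ∑ i, M i = 1)
    (hPI : (Δ * M0).trace = (β : ℂ))
    -- the dual certificate
    (X : Matrix (Fin n) (Fin n) ℂ) (hX : X.IsHermitian) (δ : ℝ)
    (hfeas1 : ∀ i, (X - (p i : ℂ) • ρ i).PosSemidef)
    (hfeas2 : (X - (δ : ℂ) • Δ).PosSemidef)
    (hcs1 : ∀ i, (X - (p i : ℂ) • ρ i) * M i = 0)
    (hcs2 : (X - (δ : ℂ) • Δ) * M0 = 0) :
    -- the candidate maximizes P_D among measurements with P_I = β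
    ∀ (N0 : Matrix (Fin n) (Fin n) ℂ) (N : Fin m → Matrix (Fin n) (Fin n) ℂ),
      N0.PosSemidef → (∀ i, (N i).PosSemidef) → (N0 + ∑ i, N i = 1) →
      (Δ * N0).trace = (β : ℂ) →
      ∑ i, p i * ((ρ i * N i).trace).re ≤ ∑ i, p i * ((ρ i * M i).trace).re := by
  intro N0 N hN0 hN hNsum hNPI
  -- identity for M: slack is zero
  have hM' : ∑ i, (p i : ℂ) * (ρ i * M i).trace = X.trace - δ * β := by
    have h := key_identity X Δ δ ρ (fun i => (p i : ℂ)) M0 M hMsum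
    rw [hcs2, hPI] at h
    simp only [hcs1, Matrix.trace_zero, Finset.sum_const_zero] at h
    linear_combination h
  -- identity for N
  have hN' : ∑ i, (p i : ℂ) * (ρ i * N i).trace
      = X.trace - δ * β
        - (((X - (δ:ℂ) • Δ) * N0).trace + ∑ i, ((X - (p i:ℂ) • ρ i) * N i).trace) := by
    have h := key_identity X Δ δ ρ (fun i => (p i : ℂ)) N0 N hNsum
    rw [hNPI] at h
    linear_combination h
  have hslack : 0 ≤ (((X - (δ:ℂ) • Δ) * N0).trace
      + ∑ i, ((X - (p i:ℂ) • ρ i) * N i).trace) := by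
    refine add_nonneg (psd_trace_mul_nonneg hfeas2 hN0) ?_
    exact Finset.sum_nonneg fun i _ => psd_trace_mul_nonneg (hfeas1 i) (hN i)
  have hre : 0 ≤ (((X - (δ:ℂ) • Δ) * N0).trace
      + ∑ i, ((X - (p i:ℂ) • ρ i) * N i).trace).re := by
    exact (Complex.le_def.mp hslack).1
  have convN : ∑ i, p i * ((ρ i * N i).trace).re
      = (∑ i, (p i : ℂ) * (ρ i * N i).trace).re := by
    rw [Complex.re_sum]; exact Finset.sum_congr rfl fun i _ => (Complex.re_ofReal_mul _ _).symm
  have convM : ∑ i, p i * ((ρ i * M i).trace).re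
      = (∑ i, (p i : ℂ) * (ρ i * M i).trace).re := by
    rw [Complex.re_sum]; exact Finset.sum_congr rfl fun i _ => (Complex.re_ofReal_mul _ _).symm
  rw [convN, convM, hM', hN', Complex.sub_re]
  linarith
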